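/- (Single integral of the SO(3) exponential.) For every ω ∈ ℝ³ and every Δ ∈ ℝ, the matrix-valued integral satisfies ∫₀^Δ exp_m((t ω)^∧) dt = Γ₁(Δ ω) · Δ, where the integral of a matrix-valued function is taken entrywise. -/

import Mathlib

open Matrix

/-- The skew-symmetric (hat) matrix of a vector `φ ∈ ℝ³`, so that `skew φ *ᵥ x = φ × x`. -/
noncomputable def skew (φ : Fin 3 → ℝ) : Matrix (Fin 3) (Fin 3) ℝ :=
  !![0, -φ 2, φ 1; φ 2, 0, -φ 0; -φ 1, φ 0, 0]

/-- `Γₘ(φ) = Σ_{n=0}^∞ (1/(n+m)!) φ̂ⁿ`. -/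
noncomputable def Gamma (m : ℕ) (φ : Fin 3 → ℝ) : Matrix (Fin 3) (Fin 3) ℝ :=
  ∑' n : ℕ, (((n + m).factorial : ℝ))⁻¹ • skew φ ^ n

section Aux

attribute [local instance] Matrix.linftyOpNormedRing Matrix.linftyOpNormedAlgebra

lemma skew_smul (t : ℝ) (ω : Fin 3 → ℝ) : skew (t • ω) = t • skew ω := by
  ext i j
  fin_cases i <;> fin_cases j <;>
    simp [skew, Matrix.smul_apply, mul_comm]

lemma entry_abs_le (A : Matrix (Fin 3) (Fin 3) ℝ) (i j : Fin 3) : |A i j| ≤ ‖A‖ := by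
  have h1 : ‖A i j‖₊ ≤ ∑ k : Fin 3, ‖A i k‖₊ :=
    Finset.single_le_sum (f := fun k => ‖A i k‖₊) (fun k _ => zero_le) (Finset.mem_univ j)
  have h2 : (∑ k : Fin 3, ‖A i k‖₊) ≤ (Finset.univ : Finset (Fin 3)).sup
      fun i : Fin 3 => ∑ k : Fin 3, ‖A i k‖₊ :=
    Finset.le_sup (f := fun i : Fin 3 => ∑ k : Fin 3, ‖A i k‖₊) (Finset.mem_univ i)
  have := (h1.trans h2)
  rw [Matrix.linfty_opNorm_def]
  exact_mod_cast this

/-- The entry of a matrix exponential as a scalar series. -/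
lemma exp_entry (A : Matrix (Fin 3) (Fin 3) ℝ) (t : ℝ) (i j : Fin 3) :
    NormedSpace.exp (t • A) i j
      = ∑' n : ℕ, (t ^ n * ((n.factorial : ℝ))⁻¹) * ((A ^ n) i j) := by
  have hs : Summable fun n : ℕ => ((n.factorial : ℝ))⁻¹ • (t • A) ^ n :=
    NormedSpace.expSeries_summable' (𝕂 := ℝ) (t • A)
  let L : Matrix (Fin 3) (Fin 3) ℝ →L[ℝ] ℝ :=
    LinearMap.toContinuousLinearMap (Matrix.entryLinearMap ℝ ℝ i j)
  have hmap := (L.map_tsum hs)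
  rw [NormedSpace.exp_eq_tsum (𝕂 := ℝ)]
  show (∑' n : ℕ, ((n.factorial : ℝ))⁻¹ • (t • A) ^ n) i j = _
  rw [show (∑' n : ℕ, ((n.factorial : ℝ))⁻¹ • (t • A) ^ n) i j
      = L (∑' n : ℕ, ((n.factorial : ℝ))⁻¹ • (t • A) ^ n) from rfl, hmap]
  refine tsum_congr fun n => ?_
  show (((n.factorial : ℝ))⁻¹ • (t • A) ^ n) i j = _
  rw [smul_pow, Matrix.smul_apply, Matrix.smul_apply, smul_eq_mul, smul_eq_mul]
  ring

lemma gamma1_summable (B : Matrix (Fin 3) (Fin 3) ℝ) :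
    Summable fun n : ℕ => (((n + 1).factorial : ℝ))⁻¹ • B ^ n := by
  apply Summable.of_norm
  apply Summable.of_nonneg_of_le (fun n => norm_nonneg _)
    (fun n => ?_) (NormedSpace.norm_expSeries_summable' (𝕂 := ℝ) B)
  rw [norm_smul, norm_smul]
  apply mul_le_mul_of_nonneg_right _ (norm_nonneg _)
  simp only [norm_inv, Real.norm_natCast]
  apply inv_anti₀
  · exact_mod_cast Nat.factorial_pos n
  · exact_mod_cast Nat.factorial_le (Nat.le_succ n)

lemma gamma1_entry (B : Matrix (Fin 3) (Fin 3) ℝ) (i j : Fin 3) :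
    (∑' n : ℕ, (((n + 1).factorial : ℝ))⁻¹ • B ^ n) i j
      = ∑' n : ℕ, (((n + 1).factorial : ℝ))⁻¹ * ((B ^ n) i j) := by
  let L : Matrix (Fin 3) (Fin 3) ℝ →L[ℝ] ℝ :=
    LinearMap.toContinuousLinearMap (Matrix.entryLinearMap ℝ ℝ i j)
  have hmap := L.map_tsum (gamma1_summable B)
  rw [show (∑' n : ℕ, (((n + 1).factorial : ℝ))⁻¹ • B ^ n) i j
      = L (∑' n : ℕ, (((n + 1).factorial : ℝ))⁻¹ • B ^ n) from rfl, hmap]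
  rfl

end Aux

section Main

attribute [local instance] Matrix.linftyOpNormedRing Matrix.linftyOpNormedAlgebra

/-- **Single integral of the SO(3) exponential** (entrywise):
`∫₀^Δ exp_m((t ω)^∧) dt = Γ₁(Δ ω) Δ`. -/
theorem integral_so3_exp (ω : Fin 3 → ℝ) (Δ : ℝ) (i j : Fin 3) :
    (∫ t in (0 : ℝ)..Δ, NormedSpace.exp (skew (t • ω)) i j) =
      (Δ • Gamma 1 (Δ • ω)) i j := by
  set A := skew ω with hA
  set c : ℕ → ℝ := fun n => (A ^ n) i j with hc
  -- the continuous summands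
  let f : ℕ → C(ℝ, ℝ) := fun n =>
    ⟨fun t => (t ^ n * ((n.factorial : ℝ))⁻¹) * c n, by fun_prop⟩
  have hcn : ∀ n : ℕ, |c n| ≤ ‖A‖ ^ n := by
    intro n
    rcases Nat.eq_zero_or_pos n with rfl | hn
    · simp only [hc, pow_zero]
      rw [Matrix.one_apply]
      split <;> simp
    · exact (entry_abs_le _ i j).trans (norm_pow_le' A hn)
  -- summability of restricted sup-norms
  have hf_sum : Summable fun n : ℕ =>
      ‖(f n).restrict (⟨Set.uIcc 0 Δ, isCompact_uIcc⟩ : TopologicalSpace.Compacts ℝ)‖ := by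
    apply Summable.of_nonneg_of_le (fun n => norm_nonneg _)
      (fun n => ?_)
      (Real.summable_pow_div_factorial (|Δ| * ‖A‖))
    rw [ContinuousMap.norm_le]
    · rintro ⟨x, hx⟩
      have hxle : |x| ≤ |Δ| := by
        have h1 := le_abs_self Δ
        have h2 := neg_abs_le Δ
        have h3 := abs_nonneg Δ
        rcases Set.mem_uIcc.mp hx with h | h <;> rw [abs_le] <;>
          exact ⟨by linarith [h.1, h.2], by linarith [h.1, h.2]⟩
      show |(x ^ n * ((n.factorial : ℝ))⁻¹) * c n| ≤ (|Δ| * ‖A‖) ^ n / n.factorial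
      rw [abs_mul, abs_mul, abs_pow, abs_inv, abs_of_nonneg (by positivity : (0:ℝ) ≤ (n.factorial : ℝ)),
        mul_pow, div_eq_mul_inv]
      calc |x| ^ n * (n.factorial : ℝ)⁻¹ * |c n|
          ≤ |Δ| ^ n * (n.factorial : ℝ)⁻¹ * ‖A‖ ^ n :=
            mul_le_mul (mul_le_mul_of_nonneg_right
              (pow_le_pow_left₀ (abs_nonneg x) hxle n) (by positivity)) (hcn n)
              (abs_nonneg _) (by positivity)
        _ = |Δ| ^ n * ‖A‖ ^ n * (n.factorial : ℝ)⁻¹ := by ring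
    · positivity
  -- rewrite integrand as a tsum and swap
  have hswap :
      (∫ t in (0:ℝ)..Δ, NormedSpace.exp (skew (t • ω)) i j)
        = ∑' n : ℕ, ∫ t in (0:ℝ)..Δ, f n t := by
    rw [intervalIntegral.tsum_intervalIntegral_eq_of_summable_norm hf_sum]
    refine intervalIntegral.integral_congr fun t _ => ?_
    rw [skew_smul, exp_entry]
    rfl
  rw [hswap]
  -- compute each integral
  have hint : ∀ n : ℕ, (∫ t in (0:ℝ)..Δ, f n t)
      = Δ * ((((n + 1).factorial : ℝ))⁻¹ * (Δ ^ n * c n)) := by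
    intro n
    show (∫ t in (0:ℝ)..Δ, (t ^ n * ((n.factorial : ℝ))⁻¹) * c n) = _
    have : ∀ t : ℝ, (t ^ n * ((n.factorial : ℝ))⁻¹) * c n
        = t ^ n * (((n.factorial : ℝ))⁻¹ * c n) := fun t => by ring
    simp_rw [this]
    rw [intervalIntegral.integral_mul_const, integral_pow]
    have h1 : ((n + 1).factorial : ℝ) = (n + 1) * (n.factorial : ℝ) := by
      push_cast [Nat.factorial_succ]; ring
    have h2 : ((n:ℝ) + 1) ≠ 0 := by positivity
    have h3 : (n.factorial : ℝ) ≠ 0 := by positivity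
    rw [h1]
    field_simp
    ring
  simp_rw [hint]
  rw [tsum_mul_left]
  -- compute the right-hand side
  have hB : skew (Δ • ω) = Δ • A := skew_smul Δ ω
  rw [Matrix.smul_apply, smul_eq_mul]
  congr 1
  rw [Gamma]
  simp_rw [hB]
  rw [gamma1_entry]
  refine tsum_congr fun n => ?_
  rw [smul_pow, Matrix.smul_apply, smul_eq_mul]

end Main
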